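/- Let R = R₁ × R₂ × ⋯ × Rₘ be a finite commutative ring with unity having an odd number of elements, where each Rᵢ is a finite commutative local ring with unique maximal ideal Mᵢ. Then the chromatic number of the unitary addition Cayley graph U(R) is at most m + ∏_{i=1}^{m} (|Rᵢ| − |Mᵢ|)/2. -/

import Mathlib

/-- The unitary addition Cayley graph of a ring `R`: vertices are elements of `R`,
and distinct `x`, `y` are adjacent iff `x + y` is a unit. -/
def unitaryCayley (R : Type*) [CommRing R] : SimpleGraph R where
  Adj x y := x ≠ y ∧ IsUnit (x + y)
  symm := ⟨fun x y ⟨h1, h2⟩ => ⟨h1.symm, by rwa [add_comm]⟩⟩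
  loopless := ⟨fun x ⟨h, _⟩ => h rfl⟩

/-- A proper coloring is complete if it is surjective and between every pair of
distinct color classes there is at least one edge. -/
def IsCompleteColoring {V β : Type*} (G : SimpleGraph V) (C : G.Coloring β) : Prop :=
  Function.Surjective C ∧
    ∀ c₁ c₂ : β, c₁ ≠ c₂ → ∃ x y, G.Adj x y ∧ C x = c₁ ∧ C y = c₂

/-- The achromatic number: the maximum number of colors in a complete proper coloring. -/
noncomputable def achromaticNumber {V : Type*} (G : SimpleGraph V) : ℕ :=
  sSup {n | ∃ C : G.Coloring (Fin n), IsCompleteColoring G C}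

lemma pi_isUnit_iff {m : ℕ} {R : Fin m → Type*} [∀ i, CommRing (R i)] (x : ∀ i, R i) :
    IsUnit x ↔ ∀ i, IsUnit (x i) := by
  constructor
  · intro h i; exact h.map (Pi.evalRingHom R i)
  · intro h
    refine IsUnit.of_mul_eq_one (a := x) (fun i => ↑(h i).unit⁻¹) ?_
    funext i
    exact (h i).mul_val_inv

noncomputable def negSetoid (S : Type*) [CommRing S] : Setoid Sˣ where
  r u v := u = v ∨ u = -v
  iseqv := by
    refine ⟨fun u => Or.inl rfl, ?_, ?_⟩
    · rintro u v (rfl | rfl)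
      · exact Or.inl rfl
      · right; simp
    · rintro u v w (rfl | rfl) (rfl | rfl) <;> simp

noncomputable instance negSetoidFintype (S : Type*) [CommRing S] [Fintype S] :
    Fintype (Quotient (negSetoid S)) := by
  classical exact Quotient.fintype _

lemma card_negQuotient_le (S : Type*) [CommRing S] [IsLocalRing S] [Fintype S]
    (hodd : Odd (Fintype.card S)) :
    Fintype.card (Quotient (negSetoid S)) ≤
      (Fintype.card S - Nat.card (IsLocalRing.maximalIdeal S)) / 2 := by
  classical
  -- every unit satisfies u ≠ -u
  have hne : ∀ u : Sˣ, u ≠ -u := by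
    intro u hu
    have hval : (u : S) = -(u : S) := by
      have := congrArg Units.val hu
      simpa using this
    have h2 : (2 : ℕ) • (u : S) = 0 := by
      have := eq_neg_iff_add_eq_zero.mp hval
      simpa [two_smul] using this
    have hdvd2 : addOrderOf (u : S) ∣ 2 := addOrderOf_dvd_of_nsmul_eq_zero h2
    have hdvdc : addOrderOf (u : S) ∣ Fintype.card S := addOrderOf_dvd_card
    have hcop : Nat.Coprime 2 (Fintype.card S) := Nat.coprime_two_left.mpr hodd
    have h1 : addOrderOf (u : S) = 1 :=
      Nat.dvd_one.mp (hcop ▸ Nat.dvd_gcd hdvd2 hdvdc)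
    have : (u : S) = 0 := AddMonoid.addOrderOf_eq_one_iff.mp h1
    exact u.ne_zero this
  -- injection (Quotient × Bool) ↪ Sˣ
  have hinj : Function.Injective
      (fun p : Quotient (negSetoid S) × Bool => cond p.2 p.1.out (-p.1.out)) := by
    rintro ⟨q, b⟩ ⟨q', b'⟩ h
    cases b <;> cases b' <;> simp only [cond_true, cond_false] at h
    · obtain rfl : q = q' := Quotient.out_inj.mp (neg_inj.mp h)
      rfl
    · exfalso
      have hqq : q = q' := by
        conv_lhs => rw [← q.out_eq]
        conv_rhs => rw [← q'.out_eq]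
        exact Quotient.sound (Or.inr (by rw [← h, neg_neg]))
      subst hqq
      exact hne q.out h.symm
    · exfalso
      have hqq : q = q' := by
        conv_lhs => rw [← q.out_eq]
        conv_rhs => rw [← q'.out_eq]
        exact Quotient.sound (Or.inr h)
      subst hqq
      exact hne q.out h
    · obtain rfl : q = q' := Quotient.out_inj.mp h
      rfl
  have hcard2 : Fintype.card (Quotient (negSetoid S)) * 2 ≤ Fintype.card Sˣ := by
    have := Fintype.card_le_of_injective _ hinj
    simpa [Fintype.card_prod] using this
  -- card of units
  have hunits : Fintype.card Sˣ = Fintype.card S - Nat.card (IsLocalRing.maximalIdeal S) := by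
    have e : Sˣ ≃ {x : S // IsUnit x} :=
      { toFun := fun u => ⟨u, u.isUnit⟩
        invFun := fun x => x.2.unit
        left_inv := fun u => Units.ext u.isUnit.unit_spec
        right_inv := fun x => Subtype.ext x.2.unit_spec }
    have e2 : (IsLocalRing.maximalIdeal S) ≃ {x : S // ¬ IsUnit x} :=
      { toFun := fun x => ⟨x.1, by
          have := x.2
          rw [IsLocalRing.mem_maximalIdeal, mem_nonunits_iff] at this
          exact this⟩
        invFun := fun x => ⟨x.1, by
          rw [IsLocalRing.mem_maximalIdeal, mem_nonunits_iff]; exact x.2⟩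
        left_inv := fun x => rfl
        right_inv := fun x => rfl }
    rw [Fintype.card_congr e, Nat.card_congr e2, Nat.card_eq_fintype_card]
    have h1 := Fintype.card_subtype_compl (fun x : S => IsUnit x)
    have h2 := Fintype.card_subtype_le (fun x : S => IsUnit x)
    omega
  rw [Nat.le_div_iff_mul_le (by norm_num), ← hunits]
  exact hcard2

theorem stmt_6 (m : ℕ) (R : Fin m → Type*) [∀ i, CommRing (R i)]
    [∀ i, IsLocalRing (R i)] [∀ i, Fintype (R i)]
    (hodd : Odd (Fintype.card (∀ i, R i))) :
    (unitaryCayley (∀ i, R i)).chromaticNumber ≤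
        ((m + ∏ i, (Fintype.card (R i) - Nat.card (IsLocalRing.maximalIdeal (R i))) / 2 : ℕ) : ℕ∞) := by
  classical
  have hoddi : ∀ i, Odd (Fintype.card (R i)) := by
    intro i
    by_contra h
    rw [Nat.not_odd_iff_even] at h
    apply Nat.not_even_iff_odd.mpr hodd
    rw [Fintype.card_pi]
    exact (even_iff_two_dvd.mpr
      ((even_iff_two_dvd.mp h).trans (Finset.dvd_prod_of_mem _ (Finset.mem_univ i))))
  have key : ∀ x : ∀ i, R i, ¬ IsUnit x → ∃ i, ¬ IsUnit (x i) := by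
    intro x hx
    by_contra hall
    push_neg at hall
    exact hx ((pi_isUnit_iff x).mpr hall)
  let β := (Fin m) ⊕ (∀ i, Quotient (negSetoid (R i)))
  let f : (∀ i, R i) → β := fun x =>
    if h : IsUnit x then Sum.inr (fun i => ⟦((pi_isUnit_iff x).mp h i).unit⟧)
    else Sum.inl (key x h).choose
  have hvalid : ∀ {x y : ∀ i, R i}, (unitaryCayley (∀ i, R i)).Adj x y → f x ≠ f y := by
    rintro x y ⟨hne, hadd⟩ heq
    have haddi : ∀ i, IsUnit (x i + y i) := fun i => (pi_isUnit_iff (x + y)).mp hadd i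
    by_cases hx : IsUnit x <;> by_cases hy : IsUnit y
    · simp only [f, dif_pos hx, dif_pos hy] at heq
      have heq' := Sum.inr_injective heq
      apply hne
      funext i
      have hi := congrFun heq' i
      rcases Quotient.exact hi with h1 | h1
      · have := congrArg Units.val h1
        simpa [IsUnit.unit_spec] using this
      · exfalso
        have h2 := congrArg Units.val h1
        rw [Units.val_neg, IsUnit.unit_spec, IsUnit.unit_spec] at h2
        have h0 : x i + y i = 0 := by rw [h2]; ring
        exact not_isUnit_zero (h0 ▸ haddi i)
    · simp only [f, dif_pos hx, dif_neg hy] at heq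
      exact Sum.inr_ne_inl heq
    · simp only [f, dif_neg hx, dif_pos hy] at heq
      exact Sum.inl_ne_inr heq
    · simp only [f, dif_neg hx, dif_neg hy] at heq
      have hi := Sum.inl_injective heq
      have h1 : ¬ IsUnit (x (key x hx).choose) := (key x hx).choose_spec
      have h2 : ¬ IsUnit (y (key x hx).choose) := by
        rw [hi]; exact (key y hy).choose_spec
      exact (IsLocalRing.nonunits_add (mem_nonunits_iff.mpr h1) (mem_nonunits_iff.mpr h2))
        (haddi _)
  let C : (unitaryCayley (∀ i, R i)).Coloring β := SimpleGraph.Coloring.mk f fun h => hvalid h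
  have hcardβ : Fintype.card β ≤
      m + ∏ i, (Fintype.card (R i) - Nat.card (IsLocalRing.maximalIdeal (R i))) / 2 := by
    rw [Fintype.card_sum, Fintype.card_fin, Fintype.card_pi]
    gcongr with i _
    exact card_negQuotient_le (R i) (hoddi i)
  exact (C.colorable.mono hcardβ).chromaticNumber_le
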